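/- arXiv:0710.4152 — 4 statements merged into one kernel-verified Lean document; each statement's English description precedes it below -/
import Mathlib

section
/- Let E be a finite type, P ∈ Finset E, V a natural number, and k, ∂_G, ∂_R : Finset E → ℕ functions satisfying (i) 2·k(A) + |A| = V + ∂_G(A) for every A ∈ Finset E, and (ii) ∂_G(A) = ∂_R(A Δ P) for every A ∈ Finset E (Δ = symmetric difference). Let R be a commutative ring and q, s, x₊, x₋ ∈ R with s² = q and x₊·x₋ = 1, and define edge weights w(e) = s·x₊ for e ∈ P and w(e) = s·x₋ for e ∉ P. Then ∑_{A ∈ Finset E} q^{k(A)} ∏_{e ∈ A} w(e) = s^V · x₊^{|P|} · ∑_{B ∈ Finset E} s^{∂_R(B)} · x₋^{|B|}. -/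
/-- The algebraic content of Proposition 3.1: the Potts partition function of an
edge-signed plane graph as a state sum of the unsigned ribbon graph. -/
theorem potts_eq_unsigned_ribbon_state_sum {E : Type*} [Fintype E] [DecidableEq E]
    (P : Finset E) (V : ℕ) (k bdG bdR : Finset E → ℕ)
    (h1 : ∀ A : Finset E, 2 * k A + A.card = V + bdG A)
    (h2 : ∀ A : Finset E, bdG A = bdR (symmDiff A P))
    (R : Type*) [CommRing R] (q s xp xm : R) (hs : s ^ 2 = q) (hx : xp * xm = 1)
    (w : E → R) (hw : ∀ e, w e = if e ∈ P then s * xp else s * xm) :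
    ∑ A : Finset E, q ^ k A * ∏ e ∈ A, w e =
      s ^ V * xp ^ P.card * ∑ B : Finset E, s ^ bdR B * xm ^ B.card := by
  subst hs
  rw [Finset.mul_sum]
  refine Fintype.sum_bijective (fun A : Finset E => symmDiff A P)
    (Function.Involutive.bijective fun A => symmDiff_symmDiff_cancel_right P A) _ _
    (fun A => ?_)
  set a := (A ∩ P).card with ha
  set b := (A \ P).card with hb
  set t := (P \ A).card with ht
  have hprod : ∏ e ∈ A, w e = (s * xp) ^ a * (s * xm) ^ b := by
    calc ∏ e ∈ A, w e = ∏ e ∈ A, (if e ∈ P then s * xp else s * xm) :=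
          Finset.prod_congr rfl fun e _ => hw e
      _ = (∏ _e ∈ A.filter (· ∈ P), (s * xp)) *
            ∏ _e ∈ A.filter (fun e => ¬ e ∈ P), (s * xm) := Finset.prod_ite _ _
      _ = (s * xp) ^ a * (s * xm) ^ b := by
          rw [Finset.prod_const, Finset.prod_const, Finset.filter_mem_eq_inter,
            ← Finset.sdiff_eq_filter]
  have hAcard : A.card = a + b := (Finset.card_inter_add_card_sdiff A P).symm
  have hPcard : P.card = a + t := by
    rw [ha, Finset.inter_comm]
    exact (Finset.card_inter_add_card_sdiff P A).symm
  have hBcard : (symmDiff A P).card = b + t := by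
    rw [symmDiff_def, Finset.sup_eq_union,
      Finset.card_union_of_disjoint (disjoint_sdiff_sdiff)]
  have hd : bdR (symmDiff A P) = bdG A := (h2 A).symm
  have h1' : 2 * k A + (a + b) = V + bdG A := by rw [← hAcard]; exact h1 A
  rw [hprod, hBcard, hPcard, hd]
  calc (s ^ 2) ^ k A * ((s * xp) ^ a * (s * xm) ^ b)
      = s ^ (2 * k A + (a + b)) * (xp ^ a * xm ^ b) := by
        rw [← pow_mul, pow_add, pow_add, mul_pow, mul_pow]; ring
    _ = s ^ (V + bdG A) * (xp ^ a * xm ^ b) := by rw [h1']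
    _ = s ^ (V + bdG A) * (xp ^ a * xm ^ b) * (xp * xm) ^ t := by rw [hx, one_pow, mul_one]
    _ = s ^ V * xp ^ (a + t) * (s ^ bdG A * xm ^ (b + t)) := by
        rw [pow_add, pow_add, pow_add, mul_pow]; ring
end

section
/- Let E be a finite type, V a natural number, and k, ∂ : Finset E → ℕ arbitrary functions; for B ∈ Finset E set r(B) = (V : ℤ) − k(B) and n(B) = (|B| : ℤ) − r(B). Let F be a field and a ∈ F with a ≠ 0 and a⁴ ≠ −1, and set δ := −a² − a⁻² (so δ ≠ 0). Then δ⁻¹ · a^{|E|} · ∑_{B ∈ Finset E} δ^{∂(B)} · a^{−2|B|} = δ^{k(E)−1} · a^{|E|+2k(E)−2V} · ∑_{B ∈ Finset E} (−a⁴−1)^{k(B)−k(E)} · (a⁻²·δ)^{n(B)} · (δ⁻¹)^{k(B)−∂(B)+n(B)}, where all integer exponents are interpreted via zpow. -/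
/-- Equation (9) of the paper: the Kauffman-bracket-type state sum equals the
evaluation of the Bollobás–Riordan state sum at `X = -a⁴`, `Y = a⁻²δ`,
`Z = δ⁻¹`, where `δ = -a² - a⁻²`; valid for arbitrary functions `k` and `∂`. -/
theorem bracket_eq_bollobas_riordan_eval {E : Type*} [Fintype E] (V : ℕ)
    (k bd : Finset E → ℕ) (F : Type*) [Field F] (a : F)
    (ha : a ≠ 0) (ha4 : a ^ 4 ≠ -1) (δ : F) (hδ : δ = -a ^ 2 - a ^ (-2 : ℤ)) :
    δ⁻¹ * a ^ Fintype.card E *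
        ∑ B : Finset E, δ ^ bd B * a ^ (-2 * (B.card : ℤ)) =
      δ ^ ((k (Finset.univ : Finset E) : ℤ) - 1) *
        a ^ ((Fintype.card E : ℤ) + 2 * (k (Finset.univ : Finset E) : ℤ) - 2 * V) *
        ∑ B : Finset E,
          (-a ^ 4 - 1) ^ ((k B : ℤ) - (k (Finset.univ : Finset E) : ℤ)) *
            (a ^ (-2 : ℤ) * δ) ^ ((B.card : ℤ) - ((V : ℤ) - k B)) *
            δ⁻¹ ^ ((k B : ℤ) - bd B + ((B.card : ℤ) - ((V : ℤ) - k B))) := by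
  have ha2 : a ^ 2 * a ^ (-2 : ℤ) = 1 := by
    rw [← zpow_natCast a 2, ← zpow_add₀ ha]; norm_num
  have hX : -a ^ 4 - 1 = a ^ 2 * δ := by
    rw [hδ]; rw [mul_sub, mul_neg, ha2]; ring
  have hδ0 : δ ≠ 0 := by
    intro h
    apply ha4
    have := hX
    rw [h, mul_zero] at this
    linear_combination -this
  -- the key bookkeeping function
  set f : ℤ → ℤ → F := fun p q => a ^ p * δ ^ q with hf
  have hmul : ∀ p q p' q' : ℤ, f p q * f p' q' = f (p + p') (q + q') := by
    intro p q p' q'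
    simp only [hf, zpow_add₀ ha, zpow_add₀ hδ0]; ring
  have hzpow : ∀ (p q e : ℤ), f p q ^ e = f (p * e) (q * e) := by
    intro p q e
    simp only [hf, mul_zpow, ← zpow_mul]
  have hfa : ∀ n : ℕ, a ^ n = f n 0 := by
    intro n; simp [hf, zpow_natCast]
  have hfan : ∀ m : ℤ, a ^ m = f m 0 := by intro m; simp [hf]
  have hfd : ∀ n : ℕ, δ ^ n = f 0 n := by intro n; simp [hf, zpow_natCast]
  have hfdz : ∀ m : ℤ, δ ^ m = f 0 m := by intro m; simp [hf]
  have hfdi : δ⁻¹ = f 0 (-1) := by simp [hf]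
  have hY : a ^ (-2 : ℤ) * δ = f (-2) 1 := by simp [hf]
  rw [Finset.mul_sum, Finset.mul_sum]
  refine Finset.sum_congr rfl fun B _ => ?_
  rw [hX, show a ^ 2 * δ = f 2 1 by
      simp only [hf]
      rw [zpow_one, show ((2:ℤ)) = ((2:ℕ):ℤ) from rfl, zpow_natCast],
    hfdi, hfa, hfd (bd B), hfan, hfdz, hfan, hY,
    hzpow, hzpow, hzpow, hmul, hmul, hmul, hmul, hmul]
  rw [hmul, hmul]
  congr 1 <;> ring
end

section
/- Let E be a finite type, V a natural number, and k, ∂ : Finset E → ℕ functions with k(E) = 1; for B ∈ Finset E set n(B) = (|B| : ℤ) − V + k(B). Let F be a field and a ∈ F with a ≠ 0 and a⁴ ≠ −1, and set δ := −a² − a⁻². Then ∑_{B ∈ Finset E} a^{|E| − 2|B|} · δ^{∂(B) − 1} = a^{|E| + 2 − 2V} · ∑_{B ∈ Finset E} (−a⁴−1)^{k(B)−1} · (a⁻²·δ)^{n(B)} · (δ⁻¹)^{k(B)−∂(B)+n(B)}, where integer exponents are interpreted via zpow. -/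
/-- The state-sum content of Theorem 4.3 (Chmutov–Pak): the Kauffman bracket of
an alternating link diagram on a surface equals an evaluation of the
Bollobás–Riordan polynomial of its (connected) Tait graph. -/
theorem surface_bracket_eq_bollobas_riordan {E : Type*} [Fintype E] (V : ℕ)
    (k bd : Finset E → ℕ) (hk : k (Finset.univ : Finset E) = 1)
    (F : Type*) [Field F] (a : F) (ha : a ≠ 0) (ha4 : a ^ 4 ≠ -1)
    (δ : F) (hδ : δ = -a ^ 2 - a ^ (-2 : ℤ)) :
    ∑ B : Finset E,
        a ^ ((Fintype.card E : ℤ) - 2 * (B.card : ℤ)) * δ ^ ((bd B : ℤ) - 1) =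
      a ^ ((Fintype.card E : ℤ) + 2 - 2 * (V : ℤ)) *
        ∑ B : Finset E,
          (-a ^ 4 - 1) ^ ((k B : ℤ) - 1) *
            (a ^ (-2 : ℤ) * δ) ^ ((B.card : ℤ) - V + k B) *
            δ⁻¹ ^ ((k B : ℤ) - bd B + ((B.card : ℤ) - V + k B)) := by
  have e2 : (a : F) ^ (2 : ℕ) = a ^ (2 : ℤ) := (zpow_natCast a 2).symm
  have e4 : (a : F) ^ (4 : ℕ) = a ^ (4 : ℤ) := (zpow_natCast a 4).symm
  have hkey : -a ^ 4 - 1 = a ^ (2 : ℤ) * δ := by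
    rw [hδ, e2, e4, mul_sub, mul_neg, ← zpow_add₀ ha, ← zpow_add₀ ha]
    norm_num
  have hδ0 : δ ≠ 0 := by
    intro h
    apply ha4
    rw [h, mul_zero] at hkey
    linear_combination -hkey
  have key : ∀ x1 x2 x3 y1 y2 y3 : ℤ,
      a ^ x1 * (a ^ x2 * δ ^ y1 * (a ^ x3 * δ ^ y2) * δ ^ y3) =
        a ^ (x1 + x2 + x3) * δ ^ (y1 + y2 + y3) := by
    intro x1 x2 x3 y1 y2 y3
    rw [zpow_add₀ ha, zpow_add₀ ha, zpow_add₀ hδ0, zpow_add₀ hδ0]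
    ring
  rw [Finset.mul_sum]
  apply Finset.sum_congr rfl
  intro B _
  set e : ℤ := (Fintype.card E : ℤ)
  set c : ℤ := (B.card : ℤ)
  set K : ℤ := (k B : ℤ)
  set D : ℤ := (bd B : ℤ)
  rw [hkey]
  symm
  calc a ^ (e + 2 - 2 * V) *
      ((a ^ (2 : ℤ) * δ) ^ (K - 1) * (a ^ (-2 : ℤ) * δ) ^ (c - V + K) *
        δ⁻¹ ^ (K - D + (c - V + K)))
      = a ^ (e + 2 - 2 * V) *
        (a ^ (2 * (K - 1)) * δ ^ (K - 1) *
          (a ^ (-2 * (c - V + K)) * δ ^ (c - V + K)) *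
            δ ^ (-(K - D + (c - V + K)))) := by
        rw [mul_zpow, mul_zpow, inv_zpow, ← zpow_neg, ← zpow_mul, ← zpow_mul]
    _ = a ^ (e + 2 - 2 * V + 2 * (K - 1) + -2 * (c - V + K)) *
          δ ^ (K - 1 + (c - V + K) + -(K - D + (c - V + K))) := by
        rw [key]
    _ = a ^ (e - 2 * c) * δ ^ (D - 1) := by
        rw [show e + 2 - 2 * V + 2 * (K - 1) + -2 * (c - V + K) = e - 2 * c by ring,
          show K - 1 + (c - V + K) + -(K - D + (c - V + K)) = D - 1 by ring]
end

section
/- Let E be a finite type, P ∈ Finset E, V a natural number, and k, ∂_G, ∂_R : Finset E → ℕ functions satisfying (i) 2·k(A) + |A| = V + ∂_G(A) for every A ∈ Finset E, and (ii) ∂_G(A) = ∂_R(A Δ P) for every A ∈ Finset E. Suppose further that for each B ∈ Finset E we are given a finite type C_B with |C_B| = ∂_R(B) and a function δ_B : C_B → Bool → ℤ with δ_B(c, true) = −δ_B(c, false) and δ_B(c, true) ∈ {1, −1} for every c. Let F be a field and a ∈ F with a ≠ 0 and a⁴ ≠ −1, and set δ := −a² − a⁻². Then δ^{−V−1} ·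 a^{|E \ P| − |P|} · ∑_{A ∈ Finset E} (δ²)^{k(A)} · ∏_{e ∈ A} (δ · a^{2·ε(e)}) = δ⁻¹ · a^{|E|} · ∑_{B ∈ Finset E} a^{−2|B|} · ∑_{f : C_B → Bool} ∏_{c ∈ C_B} (−a²)^{δ_B(c, f(c))}, where ε(e) = 1 if e ∈ P and −1 otherwise, and integer exponents are interpreted via zpow. -/
private lemma zpow_prod_aux {E : Type*} [DecidableEq E] {F : Type*} [Field F]
    {a : F} (ha : a ≠ 0) (s : Finset E) (g : E → ℤ) :
    ∏ e ∈ s, a ^ g e = a ^ (∑ e ∈ s, g e) := by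
  induction s using Finset.induction with
  | empty => simp
  | insert _ _ h ih =>
    rw [Finset.prod_insert h, Finset.sum_insert h, zpow_add₀ ha, ih]

private lemma combine_aux {F : Type*} [Field F] {δ a : F} (hδ0 : δ ≠ 0) (ha : a ≠ 0)
    (x u y v : ℤ) : δ ^ x * a ^ y * (δ ^ u * a ^ v) = δ ^ (x + u) * a ^ (y + v) := by
  rw [zpow_add₀ hδ0, zpow_add₀ ha]; ring

/-- The state-sum content of Theorem 5.6: the Kauffman bracket of a planar link
diagram, written as the Potts-model state sum over spanning subgraphs of its
Tait graph, equals a vertex model built from arrow coverings of the unsigned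
embedded medial graph (with `t = -a²`). -/
theorem bracket_eq_unsigned_vertex_model {E : Type*} [Fintype E] [DecidableEq E]
    (P : Finset E) (V : ℕ) (k bdG bdR : Finset E → ℕ)
    (h1 : ∀ A : Finset E, 2 * k A + A.card = V + bdG A)
    (h2 : ∀ A : Finset E, bdG A = bdR (symmDiff A P))
    (C : Finset E → Type*) [∀ B, Fintype (C B)] [∀ B, DecidableEq (C B)]
    (hC : ∀ B : Finset E, Fintype.card (C B) = bdR B)
    (δc : ∀ B : Finset E, C B → Bool → ℤ)
    (h3 : ∀ (B : Finset E) (c : C B), δc B c true = -δc B c false)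
    (h4 : ∀ (B : Finset E) (c : C B), δc B c true = 1 ∨ δc B c true = -1)
    (F : Type*) [Field F] (a : F) (ha : a ≠ 0) (ha4 : a ^ 4 ≠ -1)
    (δ : F) (hδ : δ = -a ^ 2 - a ^ (-2 : ℤ)) :
    δ ^ (-(V : ℤ) - 1) * a ^ (((Finset.univ \ P).card : ℤ) - (P.card : ℤ)) *
        ∑ A : Finset E, (δ ^ 2) ^ k A *
          ∏ e ∈ A, (δ * a ^ (2 * (if e ∈ P then (1 : ℤ) else -1))) =
      δ⁻¹ * a ^ Fintype.card E *
        ∑ B : Finset E, a ^ (-2 * (B.card : ℤ)) *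
          ∑ f : C B → Bool, ∏ c : C B, (-a ^ 2) ^ δc B c (f c) := by
  classical
  have hm2 : a ^ (-2 : ℤ) = (a ^ 2)⁻¹ := by
    rw [zpow_neg]
    norm_num [zpow_ofNat]
  have hδ' : δ = -a ^ 2 - (a ^ 2)⁻¹ := by rw [hδ, hm2]
  have ha2 : (a : F) ^ 2 ≠ 0 := pow_ne_zero _ ha
  have hδ0 : δ ≠ 0 := by
    rw [hδ']
    intro h
    apply ha4
    field_simp at h
    linear_combination -h
  -- the inner sum over arrow coverings equals δ ^ bdR B
  have inner : ∀ B : Finset E,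
      (∑ f : C B → Bool, ∏ c : C B, (-a ^ 2) ^ δc B c (f c)) = δ ^ bdR B := by
    intro B
    have key : ∀ c : C B, (∑ b : Bool, (-a ^ 2) ^ δc B c b) = δ := by
      intro c
      rw [Fintype.sum_bool]
      rcases h4 B c with h | h
      · have hf : δc B c false = -1 := by have := h3 B c; omega
        rw [h, hf, zpow_one, zpow_neg_one, inv_neg, hδ']
        ring
      · have hf : δc B c false = 1 := by have := h3 B c; omega
        rw [h, hf, zpow_one, zpow_neg_one, inv_neg, hδ']
        ring
    calc (∑ f : C B → Bool, ∏ c : C B, (-a ^ 2) ^ δc B c (f c))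
        = ∏ c : C B, ∑ b : Bool, (-a ^ 2) ^ δc B c b := by
          rw [Finset.prod_univ_sum (fun _ : C B => (Finset.univ : Finset Bool))
            (fun c b => (-a ^ 2) ^ δc B c b), Fintype.piFinset_univ]
      _ = ∏ _c : C B, δ := Finset.prod_congr rfl fun c _ => key c
      _ = δ ^ bdR B := by rw [Finset.prod_const, Finset.card_univ, hC]
  simp only [inner]
  rw [Finset.mul_sum, Finset.mul_sum]
  have hinv : Function.Involutive (fun A : Finset E => symmDiff A P) :=
    fun A => symmDiff_symmDiff_cancel_right P A
  refine Fintype.sum_bijective _ hinv.bijective _ _ (fun A => ?_)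
  -- per-term identity
  have hA := h1 A
  have hb : bdR (symmDiff A P) = bdG A := (h2 A).symm
  have hle : P.card ≤ Fintype.card E := Finset.card_le_univ P
  have hcard1 : ((Finset.univ \ P).card : ℤ) = (Fintype.card E : ℤ) - P.card := by
    rw [Finset.card_sdiff_of_subset (Finset.subset_univ P), Finset.card_univ, Nat.cast_sub hle]
  have hcard2 : ((symmDiff A P).card : ℤ) = ((A \ P).card : ℤ) + ((P \ A).card : ℤ) := by
    have : symmDiff A P = (A \ P) ∪ (P \ A) := rfl
    rw [this, Finset.card_union_of_disjoint disjoint_sdiff_sdiff]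
    push_cast; ring
  have hcard3 : ((A ∩ P).card : ℤ) + ((P \ A).card : ℤ) = (P.card : ℤ) := by
    have := Finset.card_inter_add_card_sdiff P A
    rw [Finset.inter_comm] at this
    push_cast [← this]; ring
  -- expand the product over A
  have hsum : (∑ e ∈ A, (2 * (if e ∈ P then (1 : ℤ) else -1)))
      = 2 * ((A ∩ P).card : ℤ) - 2 * ((A \ P).card : ℤ) := by
    simp only [mul_ite, mul_one, mul_neg]
    rw [Finset.sum_ite, Finset.sum_const, Finset.sum_const,
      Finset.filter_mem_eq_inter]
    have : Finset.filter (fun x => ¬ x ∈ P) A = A \ P := by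
      rw [Finset.sdiff_eq_filter]
    rw [this]
    simp only [nsmul_eq_mul]; ring
  have hprodA : (∏ e ∈ A, (δ * a ^ (2 * (if e ∈ P then (1 : ℤ) else -1))))
      = δ ^ (A.card : ℤ) * a ^ (2 * ((A ∩ P).card : ℤ) - 2 * ((A \ P).card : ℤ)) := by
    rw [Finset.prod_mul_distrib, Finset.prod_const, zpow_prod_aux ha, hsum, zpow_natCast]
  -- assemble
  have hk : ((δ ^ 2) ^ k A : F) = δ ^ ((2 * k A : ℕ) : ℤ) := by
    rw [← pow_mul, zpow_natCast, mul_comm]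
  show δ ^ (-(V : ℤ) - 1) * a ^ (((Finset.univ \ P).card : ℤ) - (P.card : ℤ)) *
      ((δ ^ 2) ^ k A * ∏ e ∈ A, (δ * a ^ (2 * (if e ∈ P then (1 : ℤ) else -1))))
    = δ⁻¹ * a ^ Fintype.card E *
      (a ^ (-2 * (((symmDiff A P).card : ℕ) : ℤ)) * δ ^ bdR (symmDiff A P))
  rw [hprodA, hk, hb]
  calc δ ^ (-(V : ℤ) - 1) * a ^ (((Finset.univ \ P).card : ℤ) - (P.card : ℤ)) *
        (δ ^ ((2 * k A : ℕ) : ℤ) *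
          (δ ^ (A.card : ℤ) * a ^ (2 * ((A ∩ P).card : ℤ) - 2 * ((A \ P).card : ℤ))))
      = δ ^ ((-(V : ℤ) - 1) + (((2 * k A : ℕ) : ℤ) + (A.card : ℤ))) *
        a ^ ((((Finset.univ \ P).card : ℤ) - (P.card : ℤ)) +
          (2 * ((A ∩ P).card : ℤ) - 2 * ((A \ P).card : ℤ))) := by
        rw [zpow_add₀ hδ0, zpow_add₀ hδ0, zpow_add₀ ha]; ring
    _ = δ ^ ((-1 : ℤ) + (bdG A : ℤ)) *
        a ^ ((Fintype.card E : ℤ) + (-2 * (((symmDiff A P).card : ℕ) : ℤ))) := by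
        congr 1
        · congr 1
          push_cast
          omega
        · congr 1
          rw [hcard1, hcard2]
          linarith [hcard3]
    _ = δ⁻¹ * a ^ Fintype.card E *
        (a ^ (-2 * (((symmDiff A P).card : ℕ) : ℤ)) * δ ^ bdG A) := by
        rw [zpow_add₀ hδ0, zpow_add₀ ha, zpow_neg_one, zpow_natCast, zpow_natCast]
        ring
end
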